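/- Along a helix Γ(v) = T(u₀, v) of the twizzler T(u,v) = e^{iv}γ(u) + m v e₃, the flux of the vertical Killing field Y = e₃ through the outward conormal satisfies ∮_Γ Y·η = -(2π/√g) m (γ'·iγ) evaluated at u₀, where η is the unit conormal obtained by Gram–Schmidt from T_u against T_v and √g is the area density. -/

import Mathlib

open Complex Set Real

def dot3 (a b : Fin 3 → ℝ) : ℝ := a 0 * b 0 + a 1 * b 1 + a 2 * b 2

def cdot (z w : ℂ) : ℝ := (z * (starRingEnd ℂ) w).re

noncomputable def twz (γ : ℝ → ℂ) (m u v : ℝ) : Fin 3 → ℝ :=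
  ![(Complex.exp ((v : ℂ) * Complex.I) * γ u).re,
    (Complex.exp ((v : ℂ) * Complex.I) * γ u).im, m * v]

noncomputable def twzU (γ : ℝ → ℂ) (m u v : ℝ) : Fin 3 → ℝ :=
  deriv (fun w => twz γ m w v) u

noncomputable def twzV (γ : ℝ → ℂ) (m u v : ℝ) : Fin 3 → ℝ :=
  deriv (fun w => twz γ m u w) v

noncomputable def conor (γ : ℝ → ℂ) (m u v : ℝ) : Fin 3 → ℝ :=
  let w := twzU γ m u v -
    (dot3 (twzU γ m u v) (twzV γ m u v) / dot3 (twzV γ m u v) (twzV γ m u v)) •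
      twzV γ m u v
  (1 / Real.sqrt (dot3 w w)) • w

lemma cdot_self (z : ℂ) : cdot z z = Complex.normSq z := by
  simp [cdot, Complex.mul_conj]

lemma cdot_mul_left (c z w : ℂ) : cdot (c * z) (c * w) = Complex.normSq c * cdot z w := by
  have h : c * z * (starRingEnd ℂ) (c * w)
      = (Complex.normSq c : ℂ) * (z * (starRingEnd ℂ) w) := by
    rw [map_mul]; rw [← Complex.mul_conj]; ring
  simp only [cdot]
  rw [h, Complex.re_ofReal_mul]

lemma cdot_sq_le (z w : ℂ) : (cdot z w) ^ 2 ≤ Complex.normSq z * Complex.normSq w := by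
  simp only [cdot, Complex.normSq_apply, Complex.mul_re, Complex.conj_re, Complex.conj_im]
  nlinarith [sq_nonneg (z.re * w.im - z.im * w.re)]

lemma normSq_expI (v : ℝ) : Complex.normSq (Complex.exp ((v : ℂ) * Complex.I)) = 1 := by
  rw [Complex.normSq_eq_norm_sq, Complex.norm_exp_ofReal_mul_I]; norm_num

lemma twzU_eq (γ : ℝ → ℂ) (m u v : ℝ) (hd : DifferentiableAt ℝ γ u) :
    twzU γ m u v = ![(Complex.exp ((v : ℂ) * Complex.I) * deriv γ u).re,
      (Complex.exp ((v : ℂ) * Complex.I) * deriv γ u).im, 0] := by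
  have hγ : HasDerivAt γ (deriv γ u) u := hd.hasDerivAt
  have h1 : HasDerivAt (fun w => Complex.exp ((v : ℂ) * Complex.I) * γ w)
      (Complex.exp ((v : ℂ) * Complex.I) * deriv γ u) u := hγ.const_mul _
  have H : HasDerivAt (fun w => twz γ m w v)
      (![(Complex.exp ((v : ℂ) * Complex.I) * deriv γ u).re,
        (Complex.exp ((v : ℂ) * Complex.I) * deriv γ u).im, 0]) u := by
    rw [hasDerivAt_pi]
    intro i
    fin_cases i
    · exact Complex.reCLM.hasFDerivAt.comp_hasDerivAt u h1
    · exact Complex.imCLM.hasFDerivAt.comp_hasDerivAt u h1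
    · show HasDerivAt (fun _ : ℝ => m * v) 0 u
      simpa using (hasDerivAt_const u (m * v))
  exact H.deriv

lemma twzV_eq (γ : ℝ → ℂ) (m u v : ℝ) :
    twzV γ m u v = ![(Complex.I * Complex.exp ((v : ℂ) * Complex.I) * γ u).re,
      (Complex.I * Complex.exp ((v : ℂ) * Complex.I) * γ u).im, m] := by
  have h0 : HasDerivAt (fun z : ℂ => Complex.exp (z * Complex.I))
      (Complex.exp ((v : ℂ) * Complex.I) * Complex.I) v := by
    have := (Complex.hasDerivAt_exp ((v : ℂ) * Complex.I)).comp (v : ℂ)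
      ((hasDerivAt_id (v : ℂ)).mul_const Complex.I)
    rw [one_mul] at this
    exact this
  have h1 : HasDerivAt (fun w : ℝ => Complex.exp ((w : ℂ) * Complex.I))
      (Complex.exp ((v : ℂ) * Complex.I) * Complex.I) v := h0.comp_ofReal
  have h2 : HasDerivAt (fun w : ℝ => Complex.exp ((w : ℂ) * Complex.I) * γ u)
      (Complex.I * Complex.exp ((v : ℂ) * Complex.I) * γ u) v := by
    have := h1.mul_const (γ u)
    simpa [mul_comm, mul_left_comm, mul_assoc] using this
  have H : HasDerivAt (fun w => twz γ m u w)
      (![(Complex.I * Complex.exp ((v : ℂ) * Complex.I) * γ u).re,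
        (Complex.I * Complex.exp ((v : ℂ) * Complex.I) * γ u).im, m]) v := by
    rw [hasDerivAt_pi]
    intro i
    fin_cases i
    · exact Complex.reCLM.hasFDerivAt.comp_hasDerivAt v h2
    · exact Complex.imCLM.hasFDerivAt.comp_hasDerivAt v h2
    · show HasDerivAt (fun w : ℝ => m * w) m v
      simpa using (hasDerivAt_id v).const_mul m
  exact H.deriv

lemma dot3_c (z w : ℂ) (x y : ℝ) :
    dot3 ![z.re, z.im, x] ![w.re, w.im, y] = cdot z w + x * y := by
  simp [dot3, cdot, Complex.mul_re, Complex.conj_re, Complex.conj_im]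

/-- along the helix `v ↦ T(u₀,v)`, `v ∈ [0,2π]`, the flux of the vertical
Killing field `Y = e₃` through the conormal is
`∮ Y·η ds = -(2π/√g)·m·(γ'·iγ)` evaluated at `u₀`. -/
theorem stmt_8 (a b m : ℝ) (hm : 0 < m) (γ : ℝ → ℂ)
    (hγ : ContDiffOn ℝ 2 γ (Ioo a b))
    (himm : ∀ u ∈ Ioo a b, deriv γ u ≠ 0)
    (u₀ : ℝ) (hu₀ : u₀ ∈ Ioo a b) :
    ∫ v in (0:ℝ)..(2 * π),
        dot3 (conor γ m u₀ v) ![0, 0, 1] *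
          Real.sqrt (dot3 (twzV γ m u₀ v) (twzV γ m u₀ v))
      = -(2 * π / Real.sqrt (dot3 (twzU γ m u₀ 0) (twzU γ m u₀ 0) *
            dot3 (twzV γ m u₀ 0) (twzV γ m u₀ 0) -
            (dot3 (twzU γ m u₀ 0) (twzV γ m u₀ 0)) ^ 2)) *
          (m * cdot (deriv γ u₀) (Complex.I * γ u₀)) := by
  have hd : DifferentiableAt ℝ γ u₀ :=
    ((hγ.contDiffAt ((isOpen_Ioo).mem_nhds hu₀)).differentiableAt (by norm_num))
  set A := cdot (deriv γ u₀) (Complex.I * γ u₀) with hA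
  set U := Complex.normSq (deriv γ u₀) with hU
  set B := Complex.normSq (γ u₀) + m * m with hB
  have hUpos : 0 < U := Complex.normSq_pos.2 (himm u₀ hu₀)
  have hBpos : 0 < B := by
    have := Complex.normSq_nonneg (γ u₀)
    rw [hB]; nlinarith
  have hCS : A ^ 2 ≤ U * Complex.normSq (γ u₀) := by
    have := cdot_sq_le (deriv γ u₀) (Complex.I * γ u₀)
    simpa [hA, hU, Complex.normSq_mul, Complex.normSq_I, mul_comm] using this
  have hg : 0 < U * B - A ^ 2 := by
    have h1 : U * B = U * Complex.normSq (γ u₀) + U * (m * m) := by rw [hB]; ring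
    nlinarith [mul_pos hUpos (mul_pos hm hm)]
  -- dot product values, for any v
  have hUU : ∀ v, dot3 (twzU γ m u₀ v) (twzU γ m u₀ v) = U := by
    intro v
    rw [twzU_eq γ m u₀ v hd, dot3_c, cdot_mul_left, normSq_expI, cdot_self]
    simp [hU]
  have hVV : ∀ v, dot3 (twzV γ m u₀ v) (twzV γ m u₀ v) = B := by
    intro v
    rw [twzV_eq γ m u₀ v, dot3_c, cdot_mul_left, cdot_self]
    simp [hB, Complex.normSq_mul, normSq_expI, Complex.normSq_I]
  have hUV : ∀ v, dot3 (twzU γ m u₀ v) (twzV γ m u₀ v) = A := by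
    intro v
    rw [twzU_eq γ m u₀ v hd, twzV_eq γ m u₀ v]
    have : Complex.I * Complex.exp ((v : ℂ) * Complex.I) * γ u₀
        = Complex.exp ((v : ℂ) * Complex.I) * (Complex.I * γ u₀) := by ring
    rw [this, dot3_c, cdot_mul_left, normSq_expI]
    simp [hA]
  clear_value A U B
  have hsqrtg : (0:ℝ) < Real.sqrt (U * B - A ^ 2) := Real.sqrt_pos.2 hg
  -- the integrand is constant
  have key : ∀ v, dot3 (conor γ m u₀ v) ![0, 0, 1] *
      Real.sqrt (dot3 (twzV γ m u₀ v) (twzV γ m u₀ v))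
      = -(A * m) / Real.sqrt (U * B - A ^ 2) := by
    intro v
    have hW2 : (twzU γ m u₀ v - (dot3 (twzU γ m u₀ v) (twzV γ m u₀ v) /
        dot3 (twzV γ m u₀ v) (twzV γ m u₀ v)) • twzV γ m u₀ v) 2 = -(A / B * m) := by
      rw [hUV v, hVV v, Pi.sub_apply, Pi.smul_apply, smul_eq_mul,
        twzU_eq γ m u₀ v hd, twzV_eq γ m u₀ v]
      simp
    have hWW : dot3 (twzU γ m u₀ v - (dot3 (twzU γ m u₀ v) (twzV γ m u₀ v) /
        dot3 (twzV γ m u₀ v) (twzV γ m u₀ v)) • twzV γ m u₀ v)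
        (twzU γ m u₀ v - (dot3 (twzU γ m u₀ v) (twzV γ m u₀ v) /
        dot3 (twzV γ m u₀ v) (twzV γ m u₀ v)) • twzV γ m u₀ v)
        = (U * B - A ^ 2) / B := by
      have expand : ∀ (x y : Fin 3 → ℝ) (k : ℝ),
          dot3 (x - k • y) (x - k • y)
            = dot3 x x - 2 * k * dot3 x y + k ^ 2 * dot3 y y := by
        intro x y k
        simp [dot3, Pi.sub_apply, Pi.smul_apply, smul_eq_mul]
        ring
      rw [expand, hUU v, hVV v, hUV v]
      field_simp
      ring
    have hcon : dot3 (conor γ m u₀ v) ![0, 0, 1]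
        = (1 / Real.sqrt ((U * B - A ^ 2) / B)) * (-(A / B * m)) := by
      show dot3 ((1 / Real.sqrt _) • _) _ = _
      rw [dot3]
      simp only [Pi.smul_apply, smul_eq_mul, Matrix.cons_val_zero, Matrix.cons_val_one,
        Matrix.head_cons, Matrix.cons_val_two, Matrix.tail_cons]
      rw [hWW, hW2]
      ring
    have hsB : 0 < Real.sqrt B := Real.sqrt_pos.2 hBpos
    have hsB2 : Real.sqrt B * Real.sqrt B = B := Real.mul_self_sqrt hBpos.le
    rw [hcon, hVV v, Real.sqrt_div hg.le B, one_div_div]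
    rw [show Real.sqrt B / Real.sqrt (U * B - A ^ 2) * (-(A / B * m)) * Real.sqrt B
        = -((Real.sqrt B * Real.sqrt B) * (A * m)) / (Real.sqrt (U * B - A ^ 2) * B) by
      ring]
    rw [hsB2]
    rw [mul_comm (Real.sqrt (U * B - A ^ 2)) B, ← div_div, neg_div B,
      mul_div_cancel_left₀ _ hBpos.ne', neg_div]
  rw [intervalIntegral.integral_congr (g := fun _ => -(A * m) / Real.sqrt (U * B - A ^ 2))
    (fun v _ => key v)]
  rw [intervalIntegral.integral_const]
  rw [hUU 0, hVV 0, hUV 0, smul_eq_mul]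
  ring
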